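/- Fix o ∈ X and let f ∈ L(X). The Poisson equation Δu = f has a solution u ∈ L(X) if and only if ∫_X f dπ = 0. In that case the unique solution with u(o) = 0 is given by u(o) = 0 and u(x) = −∑_{y∈X∖{o}} G_{X∖{o}}(x,y) f(y) for x ∈ X∖{o}, and the set of all solutions is exactly {u + c : c ∈ ℂ} (u plus constant functions). -/

import Mathlib

open Matrix Finset

/-- The Laplacian `Δu = Pu − u` acting on complex functions. -/
noncomputable def lap {X : Type*} [Fintype X] (P : Matrix X X ℝ) (u : X → ℂ) (x : X) : ℂ :=
  (∑ y, (P x y : ℂ) * u y) - u x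

/-- The `A × A` submatrix of `P`. -/
def subMatrix {X : Type*} (P : Matrix X X ℝ) (A : Finset X) : Matrix A A ℝ :=
  Matrix.of fun x y => P x.1 y.1

/-- The Green kernel `G_A = (I_A − P_A)⁻¹`. -/
noncomputable def green {X : Type*} [DecidableEq X] (P : Matrix X X ℝ) (A : Finset X) :
    Matrix A A ℝ :=
  (1 - subMatrix P A)⁻¹

section Aux

variable {X : Type*} [Fintype X] [DecidableEq X]

lemma pow_entry_nonneg (P : Matrix X X ℝ) (hnonneg : ∀ x y, 0 ≤ P x y) :
    ∀ n x y, 0 ≤ (P ^ n) x y := by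
  intro n
  induction n with
  | zero =>
    intro x y
    rw [pow_zero, Matrix.one_apply]
    split <;> norm_num
  | succ n ih =>
    intro x y
    rw [pow_succ, Matrix.mul_apply]
    exact Finset.sum_nonneg fun z _ => mul_nonneg (ih x z) (hnonneg z y)

lemma subharm_le (P : Matrix X X ℝ)
    (hnonneg : ∀ x y, 0 ≤ P x y) (hrow : ∀ x, ∑ y, P x y = 1)
    (hirr : ∀ x y, ∃ n, 1 ≤ n ∧ 0 < (P ^ n) x y) (o : X)
    (w : X → ℝ) (hwo : w o = 0) (hw : ∀ x, x ≠ o → w x = ∑ y, P x y * w y) :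
    ∀ x, w x ≤ 0 := by
  by_contra hc
  push_neg at hc
  obtain ⟨x₀, hx₀⟩ := hc
  obtain ⟨z, -, hz⟩ := Finset.exists_max_image univ w ⟨x₀, mem_univ x₀⟩
  have hz' : ∀ y, w y ≤ w z := fun y => hz y (mem_univ y)
  set m := w z with hm
  have hmpos : 0 < m := lt_of_lt_of_le hx₀ (hz' x₀)
  have key : ∀ n, ∀ x y, w x = m → 0 < (P ^ n) x y → w y = m := by
    intro n
    induction n with
    | zero =>
      intro x y hx hp
      rw [pow_zero, Matrix.one_apply] at hp
      by_cases h : x = y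
      · rw [← h]; exact hx
      · rw [if_neg h] at hp; exact absurd hp (lt_irrefl 0)
    | succ n ih =>
      intro x y hx hp
      rw [pow_succ', Matrix.mul_apply] at hp
      have hex : ∃ t, 0 < P x t * (P ^ n) t y := by
        by_contra h
        push_neg at h
        have : ∑ t, P x t * (P ^ n) t y ≤ 0 := Finset.sum_nonpos fun t _ => h t
        linarith
      obtain ⟨t, ht⟩ := hex
      have hPt : 0 < P x t := by
        rcases lt_or_ge 0 (P x t) with h | h
        · exact h
        · have hle : P x t = 0 := le_antisymm h (hnonneg x t)
          rw [hle, zero_mul] at ht; exact absurd ht (lt_irrefl 0)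
      have hPn : 0 < (P ^ n) t y := by
        by_contra h
        push_neg at h
        have hle : (P ^ n) t y = 0 := le_antisymm h (pow_entry_nonneg P hnonneg n t y)
        rw [hle, mul_zero] at ht; exact absurd ht (lt_irrefl 0)
      have hxo : x ≠ o := by
        intro h; rw [h, hwo] at hx; linarith
      have hsum : ∑ yy, P x yy * (m - w yy) = 0 := by
        have h1 := hw x hxo
        have h2 : ∑ yy, P x yy * m = m := by
          rw [← Finset.sum_mul, hrow x, one_mul]
        calc ∑ yy, P x yy * (m - w yy)
            = ∑ yy, (P x yy * m - P x yy * w yy) := by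
              refine Finset.sum_congr rfl fun yy _ => ?_; ring
          _ = (∑ yy, P x yy * m) - ∑ yy, P x yy * w yy := Finset.sum_sub_distrib _ _
          _ = m - w x := by rw [h2, ← h1]
          _ = 0 := by rw [hx, sub_self]
      have hall := (Finset.sum_eq_zero_iff_of_nonneg
        (fun yy _ => mul_nonneg (hnonneg x yy) (by linarith [hz' yy]))).mp hsum
      have ht0 := hall t (mem_univ t)
      have hwt : w t = m := by
        rcases mul_eq_zero.mp ht0 with h | h
        · linarith
        · linarith
      exact ih t y hwt hPn
  obtain ⟨n, -, hn⟩ := hirr z o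
  have := key n z o rfl hn
  rw [hwo] at this
  linarith

lemma kernel_triv (P : Matrix X X ℝ)
    (hnonneg : ∀ x y, 0 ≤ P x y) (hrow : ∀ x, ∑ y, P x y = 1)
    (hirr : ∀ x y, ∃ n, 1 ≤ n ∧ 0 < (P ^ n) x y) (o : X)
    (v : ↥((univ : Finset X).erase o) → ℝ)
    (hv : ((1 : Matrix _ _ ℝ) - subMatrix P ((univ : Finset X).erase o)).mulVec v = 0) :
    v = 0 := by
  classical
  have hA : True := trivial
  set w : X → ℝ := fun x => if h : x ∈ (univ : Finset X).erase o then v ⟨x, h⟩ else 0 with hwdef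
  have hoA : o ∉ (univ : Finset X).erase o := notMem_erase o univ
  have hwo : w o = 0 := by simp [hwdef, hoA]
  have hww : ∀ y : ↥((univ : Finset X).erase o), w y.1 = v y := by
    rintro ⟨y, hy⟩
    show (if h : y ∈ (univ : Finset X).erase o then v ⟨y, h⟩ else 0) = v ⟨y, hy⟩
    rw [dif_pos hy]
  have hstep : ∀ x (hxa : x ∈ (univ : Finset X).erase o), w x = ∑ y, P x y * w y := by
    intro x hxa
    have h1 := congrFun hv ⟨x, hxa⟩
    rw [Matrix.sub_mulVec, Matrix.one_mulVec] at h1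
    have h2 : (subMatrix P ((univ : Finset X).erase o)).mulVec v ⟨x, hxa⟩ = ∑ y, P x y * w y := by
      simp only [Matrix.mulVec, dotProduct]
      rw [← Finset.add_sum_erase univ (fun y => P x y * w y) (mem_univ o), hwo, mul_zero,
        zero_add, ← Finset.sum_coe_sort ((univ : Finset X).erase o) (fun y => P x y * w y)]
      refine Finset.sum_congr rfl fun y _ => ?_
      rw [hww y]
      rfl
    have h3 : v ⟨x, hxa⟩ = ∑ y, P x y * w y := by
      have h4 := sub_eq_zero.mp h1
      rw [h4, h2]
    rw [← h3]
    calc w x = w (⟨x, hxa⟩ : ↥((univ : Finset X).erase o)).1 := rfl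
      _ = v ⟨x, hxa⟩ := hww ⟨x, hxa⟩
  have hw : ∀ x, x ≠ o → w x = ∑ y, P x y * w y := fun x hx =>
    hstep x (mem_erase_of_ne_of_mem hx (mem_univ x))
  have hle := subharm_le P hnonneg hrow hirr o w hwo hw
  have hge := subharm_le P hnonneg hrow hirr o (-w) (by simp [hwo])
    (by
      intro x hx
      simp only [Pi.neg_apply]
      rw [hw x hx, ← Finset.sum_neg_distrib]
      exact Finset.sum_congr rfl fun y _ => by ring)
  have hwz : ∀ x, w x = 0 := by
    intro x
    have h5 := hge x
    simp only [Pi.neg_apply, neg_nonpos] at h5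
    linarith [hle x]
  funext y
  rw [← hww y]
  exact hwz y.1

lemma pi_lap_sum {X : Type*} [Fintype X] (P : Matrix X X ℝ) (π : X → ℝ)
    (hπstat : ∀ y, ∑ x, π x * P x y = π y) (u : X → ℂ) :
    ∑ x, (π x : ℂ) * lap P u x = 0 := by
  have key : ∀ y, ∑ x, (π x : ℂ) * (P x y : ℂ) = (π y : ℂ) := by
    intro y
    have h := hπstat y
    calc ∑ x, (π x : ℂ) * (P x y : ℂ) = ((∑ x, π x * P x y : ℝ) : ℂ) := by push_cast; ring
      _ = (π y : ℂ) := by rw [h]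
  have h1 : ∑ x, (π x : ℂ) * ∑ y, (P x y : ℂ) * u y = ∑ x, (π x : ℂ) * u x := by
    calc ∑ x, (π x : ℂ) * ∑ y, (P x y : ℂ) * u y
        = ∑ x, ∑ y, ((π x : ℂ) * (P x y : ℂ)) * u y := by
          refine Finset.sum_congr rfl fun x _ => ?_
          rw [Finset.mul_sum]
          exact Finset.sum_congr rfl fun y _ => by ring
      _ = ∑ y, ∑ x, ((π x : ℂ) * (P x y : ℂ)) * u y := Finset.sum_comm
      _ = ∑ y, (∑ x, (π x : ℂ) * (P x y : ℂ)) * u y := by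
          refine Finset.sum_congr rfl fun y _ => ?_
          rw [Finset.sum_mul]
      _ = ∑ y, (π y : ℂ) * u y := by
          refine Finset.sum_congr rfl fun y _ => ?_
          rw [key y]
  calc ∑ x, (π x : ℂ) * lap P u x
      = ∑ x, ((π x : ℂ) * ∑ y, (P x y : ℂ) * u y - (π x : ℂ) * u x) := by
        refine Finset.sum_congr rfl fun x _ => ?_
        simp [lap, mul_sub]
    _ = (∑ x, (π x : ℂ) * ∑ y, (P x y : ℂ) * u y) - ∑ x, (π x : ℂ) * u x :=
        Finset.sum_sub_distrib _ _
    _ = 0 := by rw [h1, sub_self]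

end Aux

/-- Solution of the Poisson equation `Δu = f`: it is solvable iff
`∫_X f dπ = 0`; in that case the unique grounded solution (`u o = 0`) is
`u = −G_{X∖{o}} f` on `X∖{o}`, and all solutions are `u + c`, `c ∈ ℂ`. -/
theorem poisson_equation {X : Type*} [Fintype X] [DecidableEq X]
    (P : Matrix X X ℝ)
    (hcard : 1 < Fintype.card X)
    (hnonneg : ∀ x y, 0 ≤ P x y)
    (hrow : ∀ x, ∑ y, P x y = 1)
    (hirr : ∀ x y, ∃ n, 1 ≤ n ∧ 0 < (P ^ n) x y)
    (π : X → ℝ)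
    (hπstat : ∀ y, ∑ x, π x * P x y = π y)
    (hπpos : ∀ x, 0 < π x) (hπsum : ∑ x, π x = 1)
    (o : X) (f : X → ℂ) :
    ((∃ u : X → ℂ, ∀ x, lap P u x = f x) ↔ ∑ x, (π x : ℂ) * f x = 0) ∧
    (∑ x, (π x : ℂ) * f x = 0 →
      ∃ u : X → ℂ,
        (∀ x, lap P u x = f x) ∧ u o = 0 ∧
        (∀ x, ∀ hx : x ≠ o,
          u x = -∑ y : ↥(Finset.univ.erase o),
            ((green P (Finset.univ.erase o)
                ⟨x, Finset.mem_erase_of_ne_of_mem hx (Finset.mem_univ x)⟩ y : ℝ) : ℂ)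
              * f y.1) ∧
        (∀ w : X → ℂ, ((∀ x, lap P w x = f x) ∧ w o = 0) → w = u) ∧
        (∀ w : X → ℂ, (∀ x, lap P w x = f x) ↔ ∃ c : ℂ, w = fun x => u x + c)) := by
  classical
  set A := (univ : Finset X).erase o with hAdef
  set Mr : Matrix A A ℝ := (1 : Matrix A A ℝ) - subMatrix P A with hMrdef
  set Mc : Matrix A A ℂ := Mr.map (fun r => (r : ℂ)) with hMcdef
  have hoA : o ∉ A := notMem_erase o univ
  -- complex kernel is trivial
  have hker : ∀ v : ↥A → ℂ, Mc.mulVec v = 0 → v = 0 := by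
    intro v hv
    have hentry : ∀ x : ↥A, Mc.mulVec v x = 0 := fun x => congrFun hv x
    have hre : Mr.mulVec (fun y => (v y).re) = 0 := by
      funext x
      have h1 := congrArg Complex.re (hentry x)
      simpa [Matrix.mulVec, dotProduct, hMcdef, Matrix.map_apply,
        Complex.re_sum, Complex.re_ofReal_mul] using h1
    have him : Mr.mulVec (fun y => (v y).im) = 0 := by
      funext x
      have h1 := congrArg Complex.im (hentry x)
      simpa [Matrix.mulVec, dotProduct, hMcdef, Matrix.map_apply,
        Complex.im_sum, Complex.im_ofReal_mul] using h1
    have h2 := kernel_triv P hnonneg hrow hirr o _ (by rw [← hMrdef]; exact hre)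
    have h3 := kernel_triv P hnonneg hrow hirr o _ (by rw [← hMrdef]; exact him)
    funext y
    have h2' := congrFun h2 y
    have h3' := congrFun h3 y
    simp only [Pi.zero_apply] at h2' h3' ⊢
    exact Complex.ext h2' h3'
  have hdet : Mc.det ≠ 0 := by
    intro h
    obtain ⟨v, hv0, hv⟩ := Matrix.exists_mulVec_eq_zero_iff.mpr h
    exact hv0 (hker v hv)
  have hMcinv : Mc * Mc⁻¹ = 1 := Matrix.mul_nonsing_inv Mc (isUnit_iff_ne_zero.mpr hdet)
  have hdetr : Mr.det ≠ 0 := by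
    intro h
    apply hdet
    have h2 := Complex.ofRealHom.map_det Mr
    rw [h] at h2
    simp only [map_zero] at h2
    rw [hMcdef]
    exact h2.symm
  have hgreen : Mc⁻¹ = (green P A).map (fun r => (r : ℂ)) := by
    apply Matrix.inv_eq_right_inv
    have h1 : Mr * green P A = 1 := by
      rw [green, ← hMrdef]
      exact Matrix.mul_nonsing_inv Mr (isUnit_iff_ne_zero.mpr hdetr)
    calc Mc * (green P A).map (fun r => (r : ℂ))
        = (Mr * green P A).map (Complex.ofRealHom : ℝ →+* ℂ) := by
          rw [Matrix.map_mul]; rfl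
      _ = (1 : Matrix A A ℝ).map (Complex.ofRealHom : ℝ →+* ℂ) := by rw [h1]
      _ = 1 := Matrix.map_one _ (map_zero _) (map_one _)
  -- lap on A in terms of Mc
  have hlapA : ∀ (g : X → ℂ), g o = 0 →
      ∀ x : ↥A, Mc.mulVec (fun y : ↥A => g y.1) x = -(lap P g x.1) := by
    intro g hgo x
    have hsplit : ∑ y, (P x.1 y : ℂ) * g y = ∑ y : ↥A, (P x.1 y.1 : ℂ) * g y.1 := by
      rw [← Finset.add_sum_erase univ (fun y => (P x.1 y : ℂ) * g y) (mem_univ o), hgo,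
        mul_zero, zero_add, ← Finset.sum_coe_sort A (fun y => (P x.1 y : ℂ) * g y)]
    have hentry : ∀ y : ↥A, Mc x y = (if x = y then (1 : ℂ) else 0) - (P x.1 y.1 : ℂ) := by
      intro y
      simp [hMcdef, hMrdef, Matrix.map_apply, Matrix.sub_apply, Matrix.one_apply, subMatrix,
        apply_ite (fun r : ℝ => (r : ℂ))]
    calc Mc.mulVec (fun y : ↥A => g y.1) x
        = ∑ y : ↥A, ((if x = y then (1 : ℂ) else 0) * g y.1 - (P x.1 y.1 : ℂ) * g y.1) := by
          simp only [Matrix.mulVec, dotProduct]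
          refine Finset.sum_congr rfl fun y _ => ?_
          rw [hentry y]; ring
      _ = (∑ y : ↥A, (if x = y then (1 : ℂ) else 0) * g y.1)
            - ∑ y : ↥A, (P x.1 y.1 : ℂ) * g y.1 := Finset.sum_sub_distrib _ _
      _ = g x.1 - ∑ y : ↥A, (P x.1 y.1 : ℂ) * g y.1 := by
          congr 1
          simp [ite_mul]
      _ = -(lap P g x.1) := by rw [lap, ← hsplit]; ring
  -- harmonic with zero at o is zero
  have hharm : ∀ d : X → ℂ, (∀ x, lap P d x = 0) → d o = 0 → ∀ x, d x = 0 := by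
    intro d hd hdo
    have h1 : Mc.mulVec (fun y : ↥A => d y.1) = 0 := by
      funext x
      rw [hlapA d hdo x, hd x.1, neg_zero]
      rfl
    have h2 := hker _ h1
    intro x
    by_cases hx : x = o
    · rw [hx]; exact hdo
    · have hxa : x ∈ A := mem_erase_of_ne_of_mem hx (mem_univ x)
      have h3 := congrFun h2 ⟨x, hxa⟩
      simpa using h3
  have hlap_sub : ∀ (a b : X → ℂ) (x : X),
      lap P (fun t => a t - b t) x = lap P a x - lap P b x := by
    intro a b x
    simp only [lap, mul_sub, Finset.sum_sub_distrib]
    ring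
  have hrowC : ∀ x, ∑ y, (P x y : ℂ) = 1 := fun x => by
    rw [← Complex.ofReal_sum, hrow x, Complex.ofReal_one]
  have hlap_const : ∀ (c : ℂ) (x : X), lap P (fun _ => c) x = 0 := by
    intro c x
    simp only [lap]
    rw [← Finset.sum_mul, hrowC x, one_mul, sub_self]
  have hlap_add_const : ∀ (a : X → ℂ) (c : ℂ) (x : X),
      lap P (fun t => a t + c) x = lap P a x := by
    intro a c x
    simp only [lap, mul_add, Finset.sum_add_distrib]
    rw [← Finset.sum_mul, hrowC x, one_mul]
    ring
  have fwd : (∃ u : X → ℂ, ∀ x, lap P u x = f x) → ∑ x, (π x : ℂ) * f x = 0 := by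
    rintro ⟨u, hu⟩
    have h1 := pi_lap_sum P π hπstat u
    rw [← h1]
    exact (Finset.sum_congr rfl fun x _ => by rw [hu x]).symm
  have main : ∑ x, (π x : ℂ) * f x = 0 →
      ∃ u : X → ℂ,
        (∀ x, lap P u x = f x) ∧ u o = 0 ∧
        (∀ x, ∀ hx : x ≠ o,
          u x = -∑ y : ↥A,
            ((green P A ⟨x, Finset.mem_erase_of_ne_of_mem hx (Finset.mem_univ x)⟩ y : ℝ) : ℂ)
              * f y.1) ∧
        (∀ w : X → ℂ, ((∀ x, lap P w x = f x) ∧ w o = 0) → w = u) ∧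
        (∀ w : X → ℂ, (∀ x, lap P w x = f x) ↔ ∃ c : ℂ, w = fun x => u x + c) := by
    intro hf
    set fA : ↥A → ℂ := fun y => f y.1 with hfA
    set wv : ↥A → ℂ := fun y => -(Mc⁻¹.mulVec fA) y with hwv
    set u : X → ℂ := fun x => if h : x ∈ A then wv ⟨x, h⟩ else 0 with hu
    have huo : u o = 0 := by simp [hu, hoA]
    have huA : ∀ y : ↥A, u y.1 = wv y := by
      rintro ⟨y, hy⟩
      simp [hu, hy]
    have hlapuA : ∀ x : ↥A, lap P u x.1 = f x.1 := by
      intro x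
      have h1 := hlapA u huo x
      have h2 : (fun y : ↥A => u y.1) = wv := funext huA
      rw [h2] at h1
      have h3 : Mc.mulVec wv = -fA := by
        funext t
        show Mc.mulVec (fun y => -(Mc⁻¹.mulVec fA) y) t = _
        have h4 : (fun y => -(Mc⁻¹.mulVec fA) y) = -(Mc⁻¹.mulVec fA) := rfl
        rw [h4, Matrix.mulVec_neg, Matrix.mulVec_mulVec, hMcinv, Matrix.one_mulVec]
      have h5 := (congrFun h3 x).symm.trans h1
      have h6 : -(fA x) = -(lap P u x.1) := h5
      have h7 := neg_injective h6
      exact h7.symm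
    have hlapuo : lap P u o = f o := by
      have hsum0 : ∑ x, (π x : ℂ) * (lap P u x - f x) = 0 := by
        calc ∑ x, (π x : ℂ) * (lap P u x - f x)
            = ∑ x, ((π x : ℂ) * lap P u x - (π x : ℂ) * f x) := by
              refine Finset.sum_congr rfl fun x _ => ?_; ring
          _ = (∑ x, (π x : ℂ) * lap P u x) - ∑ x, (π x : ℂ) * f x := Finset.sum_sub_distrib _ _
          _ = 0 := by rw [pi_lap_sum P π hπstat u, hf, sub_self]
      have hsplit : ∑ x, (π x : ℂ) * (lap P u x - f x)
          = (π o : ℂ) * (lap P u o - f o) + ∑ x ∈ A, (π x : ℂ) * (lap P u x - f x) :=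
        (Finset.add_sum_erase univ (fun x => (π x : ℂ) * (lap P u x - f x)) (mem_univ o)).symm
      have hz : ∑ x ∈ A, (π x : ℂ) * (lap P u x - f x) = 0 := by
        apply Finset.sum_eq_zero
        intro x hx
        have h7 : lap P u x = f x := hlapuA ⟨x, hx⟩
        rw [h7, sub_self, mul_zero]
      rw [hsplit, hz, add_zero] at hsum0
      have hπo : (π o : ℂ) ≠ 0 := by
        exact_mod_cast ne_of_gt (hπpos o)
      rcases mul_eq_zero.mp hsum0 with h | h
      · exact absurd h hπo
      · exact sub_eq_zero.mp h
    have hufull : ∀ x, lap P u x = f x := by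
      intro x
      by_cases hx : x = o
      · rw [hx]; exact hlapuo
      · exact hlapuA ⟨x, mem_erase_of_ne_of_mem hx (mem_univ x)⟩
    refine ⟨u, hufull, huo, ?_, ?_, ?_⟩
    · intro x hx
      have hxa : x ∈ A := mem_erase_of_ne_of_mem hx (mem_univ x)
      have h1 : u x = wv ⟨x, hxa⟩ := huA ⟨x, hxa⟩
      rw [h1, hwv]
      show -(Mc⁻¹.mulVec fA) ⟨x, hxa⟩ = _
      rw [hgreen]
      simp [Matrix.mulVec, dotProduct, Matrix.map_apply, hfA]
    · rintro w ⟨hw, hwo⟩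
      funext x
      have hd := hharm (fun t => w t - u t)
        (fun t => by rw [hlap_sub w u t, hw t, hufull t, sub_self])
        (by simp [hwo, huo])
      have h8 := hd x
      linear_combination h8
    · intro w
      constructor
      · intro hw
        refine ⟨w o, ?_⟩
        funext x
        have hd := hharm (fun t => (fun s => w s - u s) t - (fun _ => w o) t)
          (fun t => by
            rw [hlap_sub (fun s => w s - u s) (fun _ => w o) t, hlap_sub w u t, hw t,
              hufull t, sub_self, hlap_const (w o) t, sub_self])
          (by simp [huo])
        have h9 := hd x
        simp only at h9
        linear_combination h9
      · rintro ⟨c, rfl⟩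
        intro x
        rw [hlap_add_const u c x, hufull x]
  exact ⟨⟨fwd, fun hf => (main hf).elim fun u hu => ⟨u, hu.1⟩⟩, main⟩
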